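/- The unnormalized atomic Green's function Ḡ(iω₀|μ) = (1 + e^{β(μ-ε_σ)})/(iπ/β + μ - ε_σ) + e^{β(μ-ε_{σ̄})}(1 + e^{β(μ-ε_σ-U)})/(iπ/β + μ - ε_σ - U) is holomorphic in μ on the strip {-2π/β < Im μ ≤ 0}: each apparent pole is cancelled by a zero of its numerator. -/
import Mathlib


open Complex

lemma differentiable_dslope_of_entire {f : ℂ → ℂ} (hf : Differentiable ℂ f) (c : ℂ) :
    Differentiable ℂ (dslope f c) := by
  intro b
  rcases eq_or_ne b c with rfl | hb
  · obtain ⟨p, hp⟩ := hf.analyticAt b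
    exact (hp.has_fpower_series_dslope_fslope).analyticAt.differentiableAt
  · have h : dslope f c =ᶠ[nhds b] fun x => (f x - f c) / (x - c) := by
      filter_upwards [isOpen_ne.mem_nhds hb] with x hx
      rw [dslope_of_ne f hx, slope_def_field]
    have haux : DifferentiableAt ℂ (fun x => (f x - f c) / (x - c)) b :=
      ((hf b).sub_const (f c)).div (differentiableAt_id.sub_const c) (sub_ne_zero.mpr hb)
    exact haux.congr_of_eventuallyEq h

/-- The unnormalized atomic Green's function is holomorphic in μ on the strip
`{-2π/β < Im μ ≤ 0}`: each apparent pole is cancelled by a zero of its numerator. -/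
theorem atomic_Gbar_holomorphic (β εσ εσb U : ℝ) (hβ : 0 < β) :
    (1 + Complex.exp (β * (((εσ : ℂ) - Real.pi / β * I) - εσ)) = 0) ∧
    (1 + Complex.exp (β * (((εσ : ℂ) + U - Real.pi / β * I) - εσ - U)) = 0) ∧
    ∃ g : ℂ → ℂ,
      DifferentiableOn ℂ g {μ : ℂ | -(2 * Real.pi) / β < μ.im ∧ μ.im ≤ 0} ∧
      ∀ μ ∈ {μ : ℂ | -(2 * Real.pi) / β < μ.im ∧ μ.im ≤ 0},
        μ ≠ (εσ : ℂ) - Real.pi / β * I → μ ≠ (εσ : ℂ) + U - Real.pi / β * I →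
        g μ = (1 + Complex.exp (β * (μ - εσ))) / (Real.pi / β * I + μ - εσ)
            + Complex.exp (β * (μ - εσb)) * (1 + Complex.exp (β * (μ - εσ - U)))
              / (Real.pi / β * I + μ - εσ - U) := by
  have hβ0 : (β : ℂ) ≠ 0 := by exact_mod_cast hβ.ne'
  set c₁ : ℂ := (εσ : ℂ) - Real.pi / β * I
  set c₂ : ℂ := (εσ : ℂ) + U - Real.pi / β * I
  set f₁ : ℂ → ℂ := fun μ => 1 + Complex.exp (β * (μ - εσ))
  set f₂ : ℂ → ℂ := fun μ => 1 + Complex.exp (β * (μ - εσ - U))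
  have harg1 : (β : ℂ) * (c₁ - εσ) = -(Real.pi * I) := by
    simp only [c₁]; field_simp; ring
  have harg2 : (β : ℂ) * (c₂ - εσ - U) = -(Real.pi * I) := by
    simp only [c₂]; field_simp; ring
  have hexp : Complex.exp (-(Real.pi * I)) = -1 := by
    rw [Complex.exp_neg, Complex.exp_pi_mul_I]
    norm_num
  have h1 : f₁ c₁ = 0 := by simp only [f₁, harg1, hexp]; ring
  have h2 : f₂ c₂ = 0 := by simp only [f₂, harg2, hexp]; ring
  refine ⟨h1, h2, fun μ => dslope f₁ c₁ μ + Complex.exp (β * (μ - εσb)) * dslope f₂ c₂ μ,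
    ?_, ?_⟩
  · have hf₁ : Differentiable ℂ f₁ := by
      apply Differentiable.const_add
      exact Complex.differentiable_exp.comp (differentiable_const _ |>.mul
        ((differentiable_id.sub_const _)))
    have hf₂ : Differentiable ℂ f₂ := by
      apply Differentiable.const_add
      exact Complex.differentiable_exp.comp (differentiable_const _ |>.mul
        ((differentiable_id.sub_const _).sub_const _))
    have : Differentiable ℂ fun μ => dslope f₁ c₁ μ +
        Complex.exp (β * (μ - εσb)) * dslope f₂ c₂ μ := by
      refine (differentiable_dslope_of_entire hf₁ c₁).add ?_
      exact (Complex.differentiable_exp.comp ((differentiable_const _).mul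
        (differentiable_id.sub_const _))).mul (differentiable_dslope_of_entire hf₂ c₂)
    exact this.differentiableOn
  · intro μ _ hμ1 hμ2
    show dslope f₁ c₁ μ + Complex.exp (β * (μ - εσb)) * dslope f₂ c₂ μ = _
    rw [dslope_of_ne f₁ hμ1, dslope_of_ne f₂ hμ2, slope_def_field, slope_def_field, h1, h2]
    have e1 : μ - c₁ = Real.pi / β * I + μ - εσ := by simp only [c₁]; ring
    have e2 : μ - c₂ = Real.pi / β * I + μ - εσ - U := by simp only [c₂]; ring
    rw [sub_zero, sub_zero, e1, e2]
    simp only [f₁, f₂]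
    ring
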